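/- For any matrix A ∈ ℂ^{n×n} with A†A invertible, the unitary matrix U = A(A†A)^{-1/2} minimizes ‖A − V‖_F² over all unitary matrices V ∈ U(n). -/

import Mathlib

open Matrix
open scoped ComplexOrder

/-- The positive semidefinite square root of a positive semidefinite matrix
(removed from Mathlib; restored here with its former definition). -/
noncomputable def Matrix.PosSemidef.sqrt {𝕜 : Type*} [RCLike 𝕜] {n : Type*} [Fintype n]
    [DecidableEq n] {A : Matrix n n 𝕜} (hA : Matrix.PosSemidef A) : Matrix n n 𝕜 :=
  (hA.1.eigenvectorUnitary : Matrix n n 𝕜) * diagonal ((↑) ∘ (√·) ∘ hA.1.eigenvalues) *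
    (star hA.1.eigenvectorUnitary : Matrix n n 𝕜)

lemma Matrix.PosSemidef.posSemidef_sqrt {𝕜 : Type*} [RCLike 𝕜] {n : Type*} [Fintype n]
    [DecidableEq n] {A : Matrix n n 𝕜} (hA : Matrix.PosSemidef A) : hA.sqrt.PosSemidef := by
  have hd : (0 : n → 𝕜) ≤ ((↑) ∘ (√·) ∘ hA.1.eigenvalues) := by
    intro i
    simp only [Pi.zero_apply, Function.comp_apply]
    exact RCLike.ofReal_nonneg.mpr (Real.sqrt_nonneg _)
  have := (Matrix.PosSemidef.diagonal hd).mul_mul_conjTranspose_same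
    (hA.1.eigenvectorUnitary : Matrix n n 𝕜)
  unfold Matrix.PosSemidef.sqrt
  simpa [star_eq_conjTranspose] using this

lemma Matrix.PosSemidef.sqrt_mul_self {𝕜 : Type*} [RCLike 𝕜] {n : Type*} [Fintype n]
    [DecidableEq n] {A : Matrix n n 𝕜} (hA : Matrix.PosSemidef A) : hA.sqrt * hA.sqrt = A := by
  unfold Matrix.PosSemidef.sqrt
  conv_rhs => rw [hA.1.spectral_theorem, Unitary.conjStarAlgAut_apply]
  have hu := Unitary.coe_star_mul_self hA.1.eigenvectorUnitary
  have hdd : diagonal (((↑) ∘ (√·) ∘ hA.1.eigenvalues : n → 𝕜)) *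
      diagonal ((↑) ∘ (√·) ∘ hA.1.eigenvalues) = diagonal (RCLike.ofReal ∘ hA.1.eigenvalues) := by
    rw [diagonal_mul_diagonal]
    congr 1
    funext i
    simp only [Function.comp_apply]
    rw [← RCLike.ofReal_mul, Real.mul_self_sqrt (hA.eigenvalues_nonneg i)]
  calc _ = (hA.1.eigenvectorUnitary : Matrix n n 𝕜) *
        (diagonal ((↑) ∘ (√·) ∘ hA.1.eigenvalues) *
          ((star hA.1.eigenvectorUnitary : Matrix n n 𝕜) * (hA.1.eigenvectorUnitary : Matrix n n 𝕜)) *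
          diagonal ((↑) ∘ (√·) ∘ hA.1.eigenvalues)) *
        (star hA.1.eigenvectorUnitary : Matrix n n 𝕜) := by
          simp only [Matrix.mul_assoc]
    _ = _ := by rw [hu, Matrix.mul_one, hdd]

/-- Frobenius norm squared of a complex matrix. -/
noncomputable def frobSq {n : ℕ} (A : Matrix (Fin n) (Fin n) ℂ) : ℝ :=
  (Matrix.trace (Aᴴ * A)).re

section helpers
variable {n : ℕ}

lemma trace_form (P Q : Matrix (Fin n) (Fin n) ℂ) :
    Matrix.trace (Pᴴ * Q) =
      ∑ p : Fin n × Fin n, (starRingEnd ℂ) (P p.1 p.2) * Q p.1 p.2 := by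
  simp only [Matrix.trace, Matrix.diag, Matrix.mul_apply, Fintype.sum_prod_type,
    conjTranspose_apply, RCLike.star_def]
  rw [Finset.sum_comm]

lemma trace_self_nonneg (X : Matrix (Fin n) (Fin n) ℂ) :
    0 ≤ (Matrix.trace (Xᴴ * X)).re := by
  rw [trace_form, Complex.re_sum]
  refine Finset.sum_nonneg fun p _ => ?_
  rw [mul_comm, Complex.mul_conj]
  exact_mod_cast Complex.normSq_nonneg _

lemma trace_cs (X Y : Matrix (Fin n) (Fin n) ℂ) :
    (Matrix.trace (Xᴴ * Y)).re ≤
      Real.sqrt (Matrix.trace (Xᴴ * X)).re * Real.sqrt (Matrix.trace (Yᴴ * Y)).re := by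
  set x : EuclideanSpace ℂ (Fin n × Fin n) := WithLp.toLp 2 (fun p : Fin n × Fin n => X p.1 p.2) with hx
  set y : EuclideanSpace ℂ (Fin n × Fin n) := WithLp.toLp 2 (fun p : Fin n × Fin n => Y p.1 p.2) with hy
  have hin : ∀ (u v : EuclideanSpace ℂ (Fin n × Fin n)),
      inner (𝕜 := ℂ) u v = ∑ p : Fin n × Fin n, (starRingEnd ℂ) (u p) * (v p) := by
    intro u v
    simp [PiLp.inner_apply, RCLike.inner_apply, mul_comm]
  have hxy : Matrix.trace (Xᴴ * Y) = inner (𝕜 := ℂ) x y := by rw [trace_form, hin]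
  have h1 : (Matrix.trace (Xᴴ * Y)).re ≤ ‖inner (𝕜 := ℂ) x y‖ := by
    rw [hxy]; exact Complex.re_le_norm _
  have h2 : ‖inner (𝕜 := ℂ) x y‖ ≤ ‖x‖ * ‖y‖ := norm_inner_le_norm x y
  have hnx : ‖x‖ = Real.sqrt (Matrix.trace (Xᴴ * X)).re := by
    rw [@norm_eq_sqrt_re_inner ℂ, trace_form, hin]; rfl
  have hny : ‖y‖ = Real.sqrt (Matrix.trace (Yᴴ * Y)).re := by
    rw [@norm_eq_sqrt_re_inner ℂ, trace_form, hin]; rfl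
  calc (Matrix.trace (Xᴴ * Y)).re ≤ ‖x‖ * ‖y‖ := h1.trans h2
    _ = _ := by rw [hnx, hny]

/-- Expansion of the Frobenius distance to a unitary. -/
lemma frobSq_expand (A V : Matrix (Fin n) (Fin n) ℂ) (hV : Vᴴ * V = 1) :
    (Matrix.trace ((A - V)ᴴ * (A - V))).re =
      (Matrix.trace (Aᴴ * A)).re + n - 2 * (Matrix.trace (Vᴴ * A)).re := by
  have expand : (A - V)ᴴ * (A - V) = Aᴴ * A - Aᴴ * V - Vᴴ * A + Vᴴ * V := by
    rw [conjTranspose_sub, sub_mul, mul_sub, mul_sub]; abel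
  have hAV : (Matrix.trace (Aᴴ * V)).re = (Matrix.trace (Vᴴ * A)).re := by
    have : Aᴴ * V = (Vᴴ * A)ᴴ := by simp [conjTranspose_mul]
    rw [this, trace_conjTranspose]
    simp
  rw [expand]
  simp only [trace_add, trace_sub, hV, trace_one]
  simp only [Complex.add_re, Complex.sub_re, hAV]
  simp [Fintype.card_fin]
  ring
end helpers

/-- For any matrix `A` with `AᴴA` invertible, the matrix `A (AᴴA)^{-1/2}` minimizes
`‖A − V‖_F²` over all unitary matrices `V`. -/
theorem polar_factor_is_closest_unitary {n : ℕ} (A : Matrix (Fin n) (Fin n) ℂ)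
    (hinv : IsUnit (Aᴴ * A).det) :
    ∀ V ∈ Matrix.unitaryGroup (Fin n) ℂ,
      frobSq (A - A * ((Matrix.posSemidef_conjTranspose_mul_self A).sqrt)⁻¹) ≤
        frobSq (A - V) := by
  intro V hV
  have hA := Matrix.posSemidef_conjTranspose_mul_self A
  set S := hA.sqrt with hSdef
  have hS : S.PosSemidef := hA.posSemidef_sqrt
  have hSH : Sᴴ = S := hS.1
  have hSS : S * S = Aᴴ * A := hA.sqrt_mul_self
  -- S is invertible
  have hdetS : IsUnit S.det := by
    have : S.det * S.det = (Aᴴ * A).det := by rw [← det_mul, hSS]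
    exact isUnit_of_mul_isUnit_left (this ▸ hinv)
  set U := A * S⁻¹ with hUdef
  have hUH : Uᴴ = S⁻¹ * Aᴴ := by
    rw [hUdef, conjTranspose_mul, conjTranspose_nonsing_inv, hSH]
  have hUU : Uᴴ * U = 1 := by
    rw [hUH, hUdef, Matrix.mul_assoc, ← Matrix.mul_assoc Aᴴ A, ← hSS,
      Matrix.mul_assoc, Matrix.mul_nonsing_inv _ hdetS, Matrix.mul_one,
      Matrix.nonsing_inv_mul _ hdetS]
  have hVV : Vᴴ * V = 1 := by
    have := Matrix.mem_unitaryGroup_iff'.mp hV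
    rwa [star_eq_conjTranspose] at this
  -- trace of Uᴴ A is trace S
  have hUA : Matrix.trace (Uᴴ * A) = Matrix.trace S := by
    rw [hUH, Matrix.mul_assoc, ← hSS, ← Matrix.mul_assoc,
      Matrix.nonsing_inv_mul _ hdetS, Matrix.one_mul]
  -- square root of S
  set T := hS.sqrt with hTdef
  have hT : T.PosSemidef := hS.posSemidef_sqrt
  have hTH : Tᴴ = T := hT.1
  have hTT : T * T = S := hS.sqrt_mul_self
  -- A = U * S
  have hAUS : A = U * S := by
    rw [hUdef, Matrix.nonsing_inv_mul_cancel_right _ _ hdetS]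
  -- key inequality
  have hkey : (Matrix.trace (Vᴴ * A)).re ≤ (Matrix.trace S).re := by
    have h1 : Matrix.trace (Vᴴ * A) = Matrix.trace (Tᴴ * ((Vᴴ * U) * T)) := by
      rw [hTH, hAUS, ← hTT]
      rw [show Vᴴ * (U * (T * T)) = (Vᴴ * U * T) * T by noncomm_ring]
      rw [trace_mul_comm]
    have h2 := trace_cs T ((Vᴴ * U) * T)
    have hVU : (Vᴴ * U)ᴴ * (Vᴴ * U) = 1 := by
      rw [conjTranspose_mul, conjTranspose_conjTranspose, Matrix.mul_assoc,
        ← Matrix.mul_assoc V Vᴴ U, mul_eq_one_comm.mp hVV, Matrix.one_mul, hUU]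
    have h3 : ((Vᴴ * U) * T)ᴴ * ((Vᴴ * U) * T) = Tᴴ * T := by
      calc ((Vᴴ * U) * T)ᴴ * ((Vᴴ * U) * T)
          = Tᴴ * ((Vᴴ * U)ᴴ * (Vᴴ * U)) * T := by
            rw [conjTranspose_mul]; noncomm_ring
        _ = Tᴴ * T := by rw [hVU]; rw [Matrix.mul_one]
    have hTTtr : Matrix.trace (Tᴴ * T) = Matrix.trace S := by rw [hTH, hTT]
    rw [h3, hTTtr] at h2
    rw [h1]
    have hnn : 0 ≤ (Matrix.trace S).re := by
      have := trace_self_nonneg T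
      rwa [hTTtr] at this
    calc (Matrix.trace (Tᴴ * (Vᴴ * U * T))).re
        ≤ Real.sqrt (Matrix.trace S).re * Real.sqrt (Matrix.trace S).re := h2
      _ = (Matrix.trace S).re := Real.mul_self_sqrt hnn
  -- conclude
  have eU := frobSq_expand A U hUU
  have eV := frobSq_expand A V hVV
  show (Matrix.trace ((A - U)ᴴ * (A - U))).re ≤ (Matrix.trace ((A - V)ᴴ * (A - V))).re
  rw [eU, eV]
  have hU' : (Matrix.trace (Uᴴ * A)).re = (Matrix.trace S).re := by rw [hUA]
  rw [hU']
  linarith
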